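/- Soundness and completeness of the abstraction for roundless register protocols: for any set S ⊆ Q and register valuation v ∈ D^d, there exists a concrete configuration c reachable from some initial concrete configuration with supp(c) = S and register contents v, if and only if the abstract configuration (S, v) is reachable from some initial abstract configuration. -/

import Mathlib

/-- Actions of a roundless register protocol: read or write a symbol of `D`
on a register indexed by `R`. -/
inductive RLAct (R D : Type) : Type where
  | read (α : R) (a : D)
  | write (α : R) (a : D)

/-- Condition on register valuations `v`, `v'` for an action to fire. -/
def regCond {R D : Type} [DecidableEq R] (act : RLAct R D) (v v' : R → D) : Prop :=
  match act with
  | .read α a => v α = a ∧ v' = v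
  | .write α a => v' = Function.update v α a

/-- Concrete step: one process moves along a transition. -/
def CStep {Q R D : Type} [DecidableEq Q] [DecidableEq R]
    (Tr : Set (Q × RLAct R D × Q)) (c c' : (Q → ℕ) × (R → D)) : Prop :=
  ∃ q act q', (q, act, q') ∈ Tr ∧ 0 < c.1 q ∧
    c'.1 = (fun r => c.1 r - (if r = q then 1 else 0) + (if r = q' then 1 else 0)) ∧
    regCond act c.2 c'.2

/-- Abstract step: set-of-populated-states semantics, deserting or not. -/
def AStep {Q R D : Type} [DecidableEq R]
    (Tr : Set (Q × RLAct R D × Q)) (a a' : Set Q × (R → D)) : Prop :=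
  ∃ q act q', (q, act, q') ∈ Tr ∧ q ∈ a.1 ∧
    (a'.1 = a.1 ∪ {q'} ∨ a'.1 = (a.1 \ {q}) ∪ {q'}) ∧
    regCond act a.2 a'.2

/-- Support of a multiset of processes: the set of populated states. -/
def rlSupp {Q : Type} (μ : Q → ℕ) : Set Q := {q | 0 < μ q}

lemma regCond_self {R D : Type} [DecidableEq R] {act : RLAct R D} {v v' : R → D}
    (h : regCond act v v') : regCond act v' v' := by
  cases act with
  | read α a =>
    obtain ⟨h1, h2⟩ := h
    exact ⟨h2 ▸ h1, rfl⟩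
  | write α a =>
    simp only [regCond] at *
    rw [h, Function.update_idem]

lemma sound_step {Q R D : Type} [DecidableEq Q] [DecidableEq R]
    {Tr : Set (Q × RLAct R D × Q)} {c c' : (Q → ℕ) × (R → D)}
    (h : CStep Tr c c') : AStep Tr (rlSupp c.1, c.2) (rlSupp c'.1, c'.2) := by
  obtain ⟨q, act, q', hT, hpos, hc, hreg⟩ := h
  refine ⟨q, act, q', hT, hpos, ?_, hreg⟩
  by_cases h1 : c.1 q = 1
  · right
    ext r
    simp only [rlSupp, hc, Set.mem_union, Set.mem_diff, Set.mem_singleton_iff,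
      Set.mem_setOf_eq]
    rcases eq_or_ne r q with rfl | hrq <;> rcases eq_or_ne r q' with rfl | hrq' <;>
      simp_all <;> omega
  · left
    ext r
    simp only [rlSupp, hc, Set.mem_union, Set.mem_singleton_iff, Set.mem_setOf_eq]
    rcases eq_or_ne r q with rfl | hrq <;> rcases eq_or_ne r q' with rfl | hrq' <;>
      simp_all <;> omega

lemma multi_move {Q R D : Type} [DecidableEq Q] [DecidableEq R]
    {Tr : Set (Q × RLAct R D × Q)} {q : Q} {act : RLAct R D} {q' : Q}
    (hT : (q, act, q') ∈ Tr) :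
    ∀ (m : ℕ) (c : (Q → ℕ) × (R → D)) (v' : R → D), 0 < m → m ≤ c.1 q →
      regCond act c.2 v' →
      Relation.ReflTransGen (CStep Tr) c
        ((fun r => c.1 r - (if r = q then m else 0) + (if r = q' then m else 0)), v') := by
  intro m
  induction m with
  | zero => intro c v' h; omega
  | succ m ih =>
    intro c v' _ hle hreg
    have hstep : CStep Tr c
        ((fun r => c.1 r - (if r = q then 1 else 0) + (if r = q' then 1 else 0)), v') :=
      ⟨q, act, q', hT, by omega, rfl, hreg⟩
    rcases Nat.eq_zero_or_pos m with hm | hm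
    · subst hm
      exact Relation.ReflTransGen.single hstep
    · have hle1 : m ≤ (c.1 q - if q = q then 1 else 0) + if q = q' then 1 else 0 := by
        rw [if_pos rfl]
        split <;> omega
      have h2 := ih ((fun r => c.1 r - (if r = q then 1 else 0) + (if r = q' then 1 else 0)),
        v') v' hm hle1 (regCond_self hreg)
      have heq : (fun r => (c.1 r - (if r = q then 1 else 0) + (if r = q' then 1 else 0))
            - (if r = q then m else 0) + (if r = q' then m else 0))
          = (fun r => c.1 r - (if r = q then m + 1 else 0) + (if r = q' then m + 1 else 0)) := by
        funext r
        rcases eq_or_ne r q with rfl | hrq <;> rcases eq_or_ne r q' with rfl | hrq' <;>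
          simp_all <;> omega
      simp only at h2
      rw [heq] at h2
      exact Relation.ReflTransGen.head hstep h2

lemma move_nondesert {Q : Type} [DecidableEq Q] (μ : Q → ℕ) (q q' : Q) (A : Set Q) (k : ℕ)
    (hsupp : rlSupp μ = A) (hq : q ∈ A) (hcount : ∀ r ∈ A, 2 * k + 2 ≤ μ r) :
    rlSupp (fun r => μ r - (if r = q then k + 1 else 0) + (if r = q' then k + 1 else 0))
      = A ∪ {q'} ∧
    ∀ r ∈ A ∪ {q'},
      k + 1 ≤ μ r - (if r = q then k + 1 else 0) + (if r = q' then k + 1 else 0) := by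
  have hmem : ∀ r, r ∈ A ↔ 0 < μ r := by
    intro r; rw [← hsupp]; rfl
  have hcq : 2 * k + 2 ≤ μ q := hcount q hq
  constructor
  · ext r
    simp only [rlSupp, Set.mem_setOf_eq, Set.mem_union, Set.mem_singleton_iff]
    rw [hmem r]
    by_cases hrq : r = q <;> by_cases hrq' : r = q'
    · rw [if_pos hrq, if_pos hrq']
      have h1 : 2 * k + 2 ≤ μ r := by rw [hrq]; exact hcq
      exact ⟨fun _ => Or.inr hrq', fun _ => by omega⟩
    · rw [if_pos hrq, if_neg hrq']
      have h1 : 2 * k + 2 ≤ μ r := by rw [hrq]; exact hcq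
      exact ⟨fun h => Or.inl (by omega), fun _ => by omega⟩
    · rw [if_neg hrq, if_pos hrq']
      exact ⟨fun _ => Or.inr hrq', fun _ => by omega⟩
    · rw [if_neg hrq, if_neg hrq']
      refine ⟨fun h => Or.inl (by omega), ?_⟩
      rintro (h | h)
      · omega
      · exact absurd h hrq'
  · intro r hr
    rcases hr with hr | hr
    · have h2 := hcount r hr
      by_cases hrq : r = q <;> by_cases hrq' : r = q' <;>
        first
        | (rw [if_pos hrq] ; first | (rw [if_pos hrq']; omega) | (rw [if_neg hrq']; omega))
        | (rw [if_neg hrq] ; first | (rw [if_pos hrq']; omega) | (rw [if_neg hrq']; omega))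
    · simp only [Set.mem_singleton_iff] at hr
      rw [if_pos hr]
      by_cases hrq : r = q
      · have h1 : 2 * k + 2 ≤ μ r := by rw [hrq]; exact hcq
        rw [if_pos hrq]; omega
      · rw [if_neg hrq]; omega

lemma move_desert {Q : Type} [DecidableEq Q] (μ : Q → ℕ) (q q' : Q) (A : Set Q) (k : ℕ)
    (hsupp : rlSupp μ = A) (hq : q ∈ A) (hcount : ∀ r ∈ A, 2 * k + 2 ≤ μ r) :
    rlSupp (fun r => μ r - (if r = q then μ q else 0) + (if r = q' then μ q else 0))
      = (A \ {q}) ∪ {q'} ∧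
    ∀ r ∈ (A \ {q}) ∪ {q'},
      k + 1 ≤ μ r - (if r = q then μ q else 0) + (if r = q' then μ q else 0) := by
  have hmem : ∀ r, r ∈ A ↔ 0 < μ r := by
    intro r; rw [← hsupp]; rfl
  have hcq : 2 * k + 2 ≤ μ q := hcount q hq
  constructor
  · ext r
    simp only [rlSupp, Set.mem_setOf_eq, Set.mem_union, Set.mem_diff, Set.mem_singleton_iff]
    rw [hmem r]
    by_cases hrq : r = q <;> by_cases hrq' : r = q'
    · rw [if_pos hrq, if_pos hrq']
      have h1 : μ r = μ q := by rw [hrq]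
      exact ⟨fun _ => Or.inr hrq', fun _ => by omega⟩
    · rw [if_pos hrq, if_neg hrq']
      have h1 : μ r = μ q := by rw [hrq]
      refine ⟨fun h => absurd rfl (by omega : ¬ (0:ℕ) = 0), ?_⟩
      rintro (⟨_, hc⟩ | hc)
      · exact absurd hrq hc
      · exact absurd hc hrq'
    · rw [if_neg hrq, if_pos hrq']
      exact ⟨fun _ => Or.inr hrq', fun _ => by omega⟩
    · rw [if_neg hrq, if_neg hrq']
      refine ⟨fun h => Or.inl ⟨by omega, hrq⟩, ?_⟩
      rintro (⟨h, _⟩ | h)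
      · omega
      · exact absurd h hrq'
  · intro r hr
    rcases hr with ⟨hr, hrq⟩ | hr
    · simp only [Set.mem_singleton_iff] at hrq
      have h2 := hcount r hr
      rw [if_neg hrq]
      by_cases hrq' : r = q'
      · rw [if_pos hrq']; omega
      · rw [if_neg hrq']; omega
    · simp only [Set.mem_singleton_iff] at hr
      rw [if_pos hr]
      by_cases hrq : r = q
      · have h1 : μ r = μ q := by rw [hrq]
        rw [if_pos hrq]; omega
      · rw [if_neg hrq]; omega

lemma complete_aux {Q R D : Type} [DecidableEq Q] [DecidableEq R]
    {Tr : Set (Q × RLAct R D × Q)} {a b : Set Q × (R → D)}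
    (h : Relation.ReflTransGen (AStep Tr) a b) :
    ∃ k : ℕ, ∀ c : (Q → ℕ) × (R → D), rlSupp c.1 = a.1 → c.2 = a.2 →
      (∀ q ∈ a.1, k + 1 ≤ c.1 q) →
      ∃ c', Relation.ReflTransGen (CStep Tr) c c' ∧ rlSupp c'.1 = b.1 ∧ c'.2 = b.2 := by
  induction h using Relation.ReflTransGen.head_induction_on with
  | refl => exact ⟨0, fun c h1 h2 _ => ⟨c, Relation.ReflTransGen.refl, h1, h2⟩⟩
  | head hstep _ ih =>
    rename_i a a' _
    obtain ⟨k, hk⟩ := ih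
    refine ⟨2 * k + 1, fun c hsupp hreg hcount => ?_⟩
    obtain ⟨q, act, q', hT, hq, hdisj, hregA⟩ := hstep
    have hcount' : ∀ r ∈ a.1, 2 * k + 2 ≤ c.1 r := by
      intro r hr; have := hcount r hr; omega
    have hcq : 2 * k + 2 ≤ c.1 q := hcount' q hq
    have hregc : regCond act c.2 a'.2 := hreg ▸ hregA
    rcases hdisj with hA | hA
    · obtain ⟨hs1, hc1⟩ := move_nondesert c.1 q q' a.1 k hsupp hq hcount'
      rw [← hA] at hs1 hc1
      have hrun := multi_move hT (k + 1) c a'.2 (by omega) (by omega) hregc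
      obtain ⟨c', hc', hs', hv'⟩ := hk ((fun r => c.1 r - (if r = q then k + 1 else 0)
        + (if r = q' then k + 1 else 0)), a'.2) hs1 rfl hc1
      exact ⟨c', hrun.trans hc', hs', hv'⟩
    · obtain ⟨hs1, hc1⟩ := move_desert c.1 q q' a.1 k hsupp hq hcount'
      rw [← hA] at hs1 hc1
      have hrun := multi_move hT (c.1 q) c a'.2 (by omega) le_rfl hregc
      obtain ⟨c', hc', hs', hv'⟩ := hk ((fun r => c.1 r - (if r = q then c.1 q else 0)
        + (if r = q' then c.1 q else 0)), a'.2) hs1 rfl hc1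
      exact ⟨c', hrun.trans hc', hs', hv'⟩

/-- Soundness and completeness of the abstraction for roundless register protocols. -/
theorem soundcomplete {Q R D : Type} [Fintype Q] [DecidableEq Q] [Fintype R]
    [DecidableEq R] [Fintype D]
    (Tr : Set (Q × RLAct R D × Q)) (Q0 : Set Q) (d0 : D)
    (S : Set Q) (v : R → D) :
    (∃ c0 c : (Q → ℕ) × (R → D),
        (rlSupp c0.1).Nonempty ∧ rlSupp c0.1 ⊆ Q0 ∧ c0.2 = (fun _ => d0) ∧
        Relation.ReflTransGen (CStep Tr) c0 c ∧ rlSupp c.1 = S ∧ c.2 = v) ↔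
    (∃ S0 : Set Q, S0.Nonempty ∧ S0 ⊆ Q0 ∧
        Relation.ReflTransGen (AStep Tr) (S0, fun _ => d0) (S, v)) := by
  constructor
  · rintro ⟨c0, c, hne, hsub, hv0, hrun, hS, hv⟩
    refine ⟨rlSupp c0.1, hne, hsub, ?_⟩
    have h := Relation.ReflTransGen.lift (p := AStep Tr) (fun c : (Q → ℕ) × (R → D) => (rlSupp c.1, c.2))
      (fun a b hab => sound_step hab) _ _ hrun
    simp only [Function.onFun] at h
    rw [hv0, hS, hv] at h
    exact h
  · rintro ⟨S0, hne, hsub, hrun⟩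
    classical
    obtain ⟨k, hk⟩ := complete_aux hrun
    set c0 : (Q → ℕ) × (R → D) := ((fun q => if q ∈ S0 then k + 1 else 0), fun _ => d0)
      with hc0
    have hsupp : rlSupp c0.1 = S0 := by
      ext r
      simp only [rlSupp, hc0, Set.mem_setOf_eq]
      by_cases h : r ∈ S0 <;> simp [h]
    obtain ⟨c, hc, hs, hv⟩ := hk c0 hsupp rfl (fun q hq => by simp [hc0, hq])
    exact ⟨c0, c, hsupp ▸ hne, hsupp ▸ hsub, rfl, hc, hs, hv⟩
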